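/- Let α ∈ ℂ with |α| < 1. Then the following are equivalent: (i) for every v ∈ ℂ^m with e₀*v = 0, one has ((A − \bar{α}I_m)v)* G ((A − \bar{α}I_m)v) = ((I_m − αA)v)* G ((I_m − αA)v); (ii) G is block Toeplitz. (Condition (i) expresses that the operator S_α = −\bar{α}I + (1−|α|²)R_α acts isometrically on the subspace {Fu : F(α)u = 0} of the Hilbert space of polynomials Fu with inner product ⟨Fu, Fw⟩ = w*Gu, since such Fu = F(I_m−αA)v with e₀*v = F(α)u = 0 and S_α(Fu) = F(A−\bar{α}I_m)v.) -/

import Mathlib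

open Matrix Complex
open scoped ComplexConjugate ComplexOrder

noncomputable section

/-- Index type for `ℂ^m` with `m = (n+1)p`, viewed as `n+1` blocks of size `p`. -/
abbrev Idx (n p : ℕ) : Type := Fin (n + 1) × Fin p

/-- The `p × m` matrix polynomial `F(λ) = [I_p, λI_p, …, λ^n I_p]`. -/
def Fm (n p : ℕ) (lam : ℂ) : Matrix (Fin p) (Idx n p) ℂ :=
  Matrix.of fun i jk => lam ^ (jk.1 : ℕ) * (if jk.2 = i then 1 else 0)

/-- The `m × p` matrix `e_k` whose `k`-th block is `I_p` and other blocks are `0`. -/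
def Ek (n p : ℕ) (k : Fin (n + 1)) : Matrix (Idx n p) (Fin p) ℂ :=
  Matrix.of fun jl i => if jl.1 = k ∧ jl.2 = i then 1 else 0

/-- The nilpotent block shift matrix `A` with blocks `A_{ij} = I_p` iff `j = i+1`. -/
def Am (n p : ℕ) : Matrix (Idx n p) (Idx n p) ℂ :=
  Matrix.of fun ia jb => if (jb.1 : ℕ) = (ia.1 : ℕ) + 1 ∧ ia.2 = jb.2 then 1 else 0

/-- `G` is block Toeplitz: `g_{i+1,j+1} = g_{ij}` for `0 ≤ i,j ≤ n−1`. -/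
def BlockToeplitz (n p : ℕ) (G : Matrix (Idx n p) (Idx n p) ℂ) : Prop :=
  ∀ (i j : Fin n) (a b : Fin p),
    G (i.succ, a) (j.succ, b) = G (i.castSucc, a) (j.castSucc, b)

section Aux

variable {ι : Type*} [Fintype ι] [DecidableEq ι]

/-- Rewriting a quadratic form of a transformed vector. -/
lemma aux_quad_eq (Gm B : Matrix ι ι ℂ) (v : ι → ℂ) :
    star (B *ᵥ v) ⬝ᵥ (Gm *ᵥ (B *ᵥ v)) = star v ⬝ᵥ ((Bᴴ * Gm * B) *ᵥ v) := by
  rw [star_mulVec, mulVec_mulVec, dotProduct_mulVec, vecMul_vecMul, ← dotProduct_mulVec,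
    Matrix.mul_assoc]

/-- Quadratic form evaluated at a combination of two basis vectors. -/
lemma aux_quad_single (N : Matrix ι ι ℂ) (x y : ι) (s t : ℂ) :
    star (s • (Pi.single x 1 : ι → ℂ) + t • (Pi.single y 1 : ι → ℂ)) ⬝ᵥ
      (N *ᵥ (s • (Pi.single x 1 : ι → ℂ) + t • (Pi.single y 1 : ι → ℂ))) =
      conj s * s * N x x + conj s * t * N x y + conj t * s * N y x + conj t * t * N y y := by
  simp only [mulVec_add, mulVec_smul, star_add, dotProduct_add, add_dotProduct, mulVec_single,
    smul_dotProduct, dotProduct_smul, Pi.star_def, star_smul, Complex.star_def, mul_one,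
    Pi.single_apply, apply_ite (starRingEnd ℂ), _root_.map_one, _root_.map_zero, dotProduct,
    Pi.add_apply, Pi.smul_apply, ite_mul, mul_ite, one_mul, mul_one, zero_mul, mul_zero,
    smul_eq_mul, mul_add, add_mul, Finset.sum_add_distrib, Finset.sum_ite_eq,
    Finset.sum_ite_eq', Finset.mem_univ, if_true, col_apply, MulOpposite.op_one, one_smul]
  ring

/-- Polarization: a quadratic form vanishes on a coordinate subspace iff the corresponding
entries of the matrix vanish. -/
lemma aux_polar (N : Matrix ι ι ℂ) (S : ι → Prop) [DecidablePred S] :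
    (∀ v : ι → ℂ, (∀ x, ¬ S x → v x = 0) → star v ⬝ᵥ (N *ᵥ v) = 0) ↔
      ∀ x, S x → ∀ y, S y → N x y = 0 := by
  constructor
  · intro h x hx y hy
    have hsupp : ∀ (x' y' : ι), S x' → S y' → ∀ (s t : ℂ), ∀ w, ¬ S w →
        (s • (Pi.single x' 1 : ι → ℂ) + t • (Pi.single y' 1 : ι → ℂ)) w = 0 := by
      intro x' y' hx' hy' s t w hw
      have hwx : w ≠ x' := fun hh => hw (hh ▸ hx')
      have hwy : w ≠ y' := fun hh => hw (hh ▸ hy')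
      simp [Pi.single_apply, hwx, hwy]
    have d : ∀ z, S z → N z z = 0 := by
      intro z hz
      have := h ((1:ℂ) • (Pi.single z 1 : ι → ℂ) + (0:ℂ) • (Pi.single z 1 : ι → ℂ))
        (hsupp z z hz hz 1 0 · ·)
      rw [aux_quad_single] at this
      simpa using this
    have h1 := h _ (hsupp x y hx hy 1 1)
    have hI := h _ (hsupp x y hx hy 1 Complex.I)
    rw [aux_quad_single] at h1 hI
    simp only [d x hx, d y hy, _root_.map_one, Complex.conj_I, one_mul, mul_one, mul_zero,
      zero_mul, Complex.I_mul_I, add_zero, zero_add] at h1 hI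
    have h2 : Complex.I * N x y = Complex.I * N y x := by linear_combination hI
    have h3 := mul_left_cancel₀ Complex.I_ne_zero h2
    linear_combination h1 / 2 + h3 / 2
  · intro h v hv
    simp only [dotProduct, mulVec, dotProduct, Pi.star_apply]
    apply Finset.sum_eq_zero
    intro u _
    by_cases hu : S u
    · apply mul_eq_zero_of_right
      apply Finset.sum_eq_zero
      intro w _
      by_cases hw : S w
      · rw [h u hu w hw, zero_mul]
      · rw [hv w hw, mul_zero]
    · rw [hv u hu, star_zero, zero_mul]

end Aux

lemma aux_Ek0_mulVec (n p : ℕ) (v : Idx n p → ℂ) (i : Fin p) :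
    ((Ek n p 0)ᴴ *ᵥ v) i = v (0, i) := by
  simp only [mulVec, dotProduct, conjTranspose_apply, Ek, Matrix.of_apply,
    apply_ite (star : ℂ → ℂ), star_one, star_zero, ite_mul, one_mul, zero_mul]
  rw [Finset.sum_eq_single ((0 : Fin (n+1)), i)]
  · simp
  · intro b _ hb
    rw [if_neg]
    rintro ⟨h1, h2⟩
    exact hb (Prod.ext h1 h2)
  · simp

lemma aux_e0_cond (n p : ℕ) (v : Idx n p → ℂ) :
    (Ek n p 0)ᴴ *ᵥ v = 0 ↔ ∀ x : Idx n p, ¬ (x.1 ≠ 0) → v x = 0 := by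
  constructor
  · intro h x hx
    rw [not_not] at hx
    obtain ⟨x1, x2⟩ := x
    have := congrFun h x2
    rw [aux_Ek0_mulVec] at this
    simp only at hx
    rw [hx]
    exact this
  · intro h
    funext i
    rw [Pi.zero_apply, aux_Ek0_mulVec]
    exact h (0, i) (by simp)

lemma aux_Am_succ (n p : ℕ) (w : Idx n p) (j : Fin n) (b : Fin p) :
    Am n p w (j.succ, b) = if w = (j.castSucc, b) then 1 else 0 := by
  obtain ⟨w1, w2⟩ := w
  simp only [Am, Matrix.of_apply, Fin.val_succ, Prod.mk.injEq]
  congr 1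
  simp only [eq_iff_iff]
  constructor
  · rintro ⟨h1, h2⟩
    refine ⟨Fin.ext ?_, h2⟩
    simp only [Fin.coe_castSucc]
    omega
  · rintro ⟨h1, h2⟩
    refine ⟨?_, h2⟩
    rw [h1]
    simp

lemma aux_AGA_entry (n p : ℕ) (G : Matrix (Idx n p) (Idx n p) ℂ) (i j : Fin n) (a b : Fin p) :
    ((Am n p)ᴴ * G * Am n p) (i.succ, a) (j.succ, b) = G (i.castSucc, a) (j.castSucc, b) := by
  simp only [Matrix.mul_apply, conjTranspose_apply, aux_Am_succ, apply_ite (star : ℂ → ℂ),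
    star_one, star_zero, ite_mul, one_mul, zero_mul, mul_ite, mul_one, mul_zero]
  simp [Finset.sum_ite_eq', Finset.sum_ite_eq]

lemma aux_keyN (n p : ℕ) (α : ℂ) (G : Matrix (Idx n p) (Idx n p) ℂ) :
    (Am n p - conj α • 1)ᴴ * G * (Am n p - conj α • 1) -
      (1 - α • Am n p)ᴴ * G * (1 - α • Am n p) =
    (1 - α * conj α) • ((Am n p)ᴴ * G * Am n p - G) := by
  simp only [conjTranspose_sub, conjTranspose_smul, conjTranspose_one, Complex.star_def,
    Complex.conj_conj, Matrix.sub_mul, Matrix.mul_sub, Matrix.smul_mul, Matrix.mul_smul,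
    smul_smul, sub_smul, smul_sub, one_smul, Matrix.one_mul, Matrix.mul_one]
  module

theorem stmt3 (p n : ℕ) (hp : 0 < p) (hn : 0 < n)
    (G : Matrix (Idx n p) (Idx n p) ℂ) (hG : G.PosDef) (α : ℂ) (hα : ‖α‖ < 1) :
    (∀ v : Idx n p → ℂ, (Ek n p 0)ᴴ *ᵥ v = 0 →
        star ((Am n p - conj α • 1) *ᵥ v) ⬝ᵥ (G *ᵥ ((Am n p - conj α • 1) *ᵥ v)) =
          star ((1 - α • Am n p) *ᵥ v) ⬝ᵥ (G *ᵥ ((1 - α • Am n p) *ᵥ v))) ↔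
      BlockToeplitz n p G := by
  set M : Matrix (Idx n p) (Idx n p) ℂ := (Am n p)ᴴ * G * Am n p - G with hM
  -- the scalar 1 - α * conj α is nonzero
  have hscal : (1 : ℂ) - α * conj α ≠ 0 := by
    rw [Complex.mul_conj, sub_ne_zero]
    intro hh
    have hre := congrArg Complex.re hh
    simp only [Complex.one_re, Complex.ofReal_re] at hre
    have h1 : Complex.normSq α < 1 := by
      rw [← Complex.sq_norm]
      nlinarith [norm_nonneg α]
    linarith
  -- per-vector reformulation
  have step1 : ∀ v : Idx n p → ℂ,
      (star ((Am n p - conj α • 1) *ᵥ v) ⬝ᵥ (G *ᵥ ((Am n p - conj α • 1) *ᵥ v)) =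
        star ((1 - α • Am n p) *ᵥ v) ⬝ᵥ (G *ᵥ ((1 - α • Am n p) *ᵥ v))) ↔
      star v ⬝ᵥ (M *ᵥ v) = 0 := by
    intro v
    rw [aux_quad_eq, aux_quad_eq, ← sub_eq_zero, ← dotProduct_sub, ← sub_mulVec,
      aux_keyN n p α G, ← hM, smul_mulVec, dotProduct_smul, smul_eq_mul,
      mul_eq_zero, or_iff_right hscal]
  have main : (∀ v : Idx n p → ℂ, (Ek n p 0)ᴴ *ᵥ v = 0 →
        star ((Am n p - conj α • 1) *ᵥ v) ⬝ᵥ (G *ᵥ ((Am n p - conj α • 1) *ᵥ v)) =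
          star ((1 - α • Am n p) *ᵥ v) ⬝ᵥ (G *ᵥ ((1 - α • Am n p) *ᵥ v))) ↔
      ∀ x : Idx n p, x.1 ≠ 0 → ∀ y : Idx n p, y.1 ≠ 0 → M x y = 0 := by
    rw [← aux_polar M (fun x : Idx n p => x.1 ≠ 0)]
    constructor
    · intro h v hv
      exact (step1 v).mp (h v ((aux_e0_cond n p v).mpr hv))
    · intro h v hv
      exact (step1 v).mpr (h v ((aux_e0_cond n p v).mp hv))
  rw [main]
  constructor
  · intro h i j a b
    have := h (i.succ, a) (by simp [Fin.succ_ne_zero]) (j.succ, b) (by simp [Fin.succ_ne_zero])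
    rw [hM, Matrix.sub_apply, aux_AGA_entry, sub_eq_zero] at this
    exact this.symm
  · intro h x hx y hy
    obtain ⟨x1, a⟩ := x
    obtain ⟨y1, b⟩ := y
    simp only at hx hy
    obtain ⟨i, rfl⟩ := Fin.eq_succ_of_ne_zero hx
    obtain ⟨j, rfl⟩ := Fin.eq_succ_of_ne_zero hy
    rw [hM, Matrix.sub_apply, aux_AGA_entry, sub_eq_zero]
    exact (h i j a b).symm

end
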